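/- Let 0 < p < 1, q = 1 - p, let s be a positive integer, and let x be a real number with x < min(log(1/p), log(1/q)). Then the moment generating function of SNB(p, s, t) converges to that of the negative binomial as t → ∞: lim_{t→∞} ( ∑_{k=s}^{s+t-1} C(k-1, s-1) p^s q^{k-s} e^{kx} + ∑_{k=t}^{s+t-1} C(k-1, t-1) p^{k-t} q^t e^{kx} ) = (p e^x / (1 - q e^x))^s. -/

import Mathlib

/-- As `t → ∞`, the moment generating function of the SNB(p, s, t) distribution
converges to that of the negative binomial distribution. -/
theorem snb_mgf_tendsto_negbinom_mgf (p q : ℝ) (hp0 : 0 < p) (hp1 : p < 1)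
    (hq : q = 1 - p) (s : ℕ) (hs : 0 < s)
    (x : ℝ) (hx : x < min (Real.log (1 / p)) (Real.log (1 / q))) :
    Filter.Tendsto
      (fun t : ℕ =>
        (∑ k ∈ Finset.Icc s (s + t - 1),
          (Nat.choose (k - 1) (s - 1) : ℝ) * p ^ s * q ^ (k - s) * Real.exp (k * x)) +
        (∑ k ∈ Finset.Icc t (s + t - 1),
          (Nat.choose (k - 1) (t - 1) : ℝ) * p ^ (k - t) * q ^ t * Real.exp (k * x)))
      Filter.atTop
      (nhds ((p * Real.exp x / (1 - q * Real.exp x)) ^ s)) := by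
  have hq0 : 0 < q := by rw [hq]; linarith
  have hex : 0 < Real.exp x := Real.exp_pos x
  set r := q * Real.exp x with hr_def
  set P := p * Real.exp x with hP_def
  have hr0 : 0 < r := mul_pos hq0 hex
  have hP0 : 0 < P := mul_pos hp0 hex
  have hr1 : r < 1 := by
    have h1 : x < Real.log (1 / q) := lt_of_lt_of_le hx (min_le_right _ _)
    have h2 := Real.exp_lt_exp.2 h1
    rw [Real.exp_log (by positivity)] at h2
    have := mul_lt_mul_of_pos_left h2 hq0
    rwa [mul_one_div, div_self (ne_of_gt hq0)] at this
  have hP1 : P < 1 := by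
    have h1 : x < Real.log (1 / p) := lt_of_lt_of_le hx (min_le_left _ _)
    have h2 := Real.exp_lt_exp.2 h1
    rw [Real.exp_log (by positivity)] at h2
    have := mul_lt_mul_of_pos_left h2 hp0
    rwa [mul_one_div, div_self (ne_of_gt hp0)] at this
  have hrn : ‖r‖ < 1 := by rw [Real.norm_eq_abs, abs_of_pos hr0]; exact hr1
  -- first sum
  have hA : Filter.Tendsto
      (fun t : ℕ => ∑ k ∈ Finset.Icc s (s + t - 1),
        (Nat.choose (k - 1) (s - 1) : ℝ) * p ^ s * q ^ (k - s) * Real.exp (k * x))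
      Filter.atTop (nhds (P ^ s * (1 / (1 - r) ^ s))) := by
    have hsum := (hasSum_choose_mul_geometric_of_norm_lt_one (s - 1) hrn).tendsto_sum_nat
    rw [show s - 1 + 1 = s by omega] at hsum
    have := hsum.const_mul (P ^ s)
    refine this.congr (fun t => ?_)
    rw [Finset.mul_sum, ← Finset.Ico_add_one_right_eq_Icc, show s + t - 1 + 1 = s + t by omega,
      Finset.sum_Ico_eq_sum_range, show s + t - s = t by omega]
    refine Finset.sum_congr rfl (fun j _ => ?_)
    rw [show s + j - 1 = j + (s - 1) by omega, show s + j - s = j by omega]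
    push_cast
    rw [add_mul, Real.exp_add, Real.exp_nat_mul, Real.exp_nat_mul,
      hP_def, hr_def, mul_pow, mul_pow]
    ring
  -- second sum
  have hB : Filter.Tendsto
      (fun t : ℕ => ∑ k ∈ Finset.Icc t (s + t - 1),
        (Nat.choose (k - 1) (t - 1) : ℝ) * p ^ (k - t) * q ^ t * Real.exp (k * x))
      Filter.atTop (nhds 0) := by
    have hgeo : Filter.Tendsto (fun t : ℕ => (s * 2 ^ s : ℝ) * ((t : ℝ) ^ s * r ^ t))
        Filter.atTop (nhds ((s * 2 ^ s : ℝ) * 0)) :=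
      ((summable_pow_mul_geometric_of_norm_lt_one s hrn).tendsto_atTop_zero).const_mul _
    rw [mul_zero] at hgeo
    refine squeeze_zero' ?_ ?_ hgeo
    · filter_upwards with t
      refine Finset.sum_nonneg (fun k _ => ?_)
      positivity
    · filter_upwards [Filter.eventually_ge_atTop s] with t ht
      have ht1 : 1 ≤ t := le_trans hs ht
      rw [← Finset.Ico_add_one_right_eq_Icc, show s + t - 1 + 1 = t + s by omega,
        Finset.sum_Ico_eq_sum_range, show t + s - t = s by omega]
      have hbound : ∀ i ∈ Finset.range s,
          (Nat.choose (t + i - 1) (t - 1) : ℝ) * p ^ (t + i - t) * q ^ t *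
            Real.exp ((t + i : ℕ) * x) ≤ 2 ^ s * (t : ℝ) ^ s * r ^ t := by
        intro i hi
        rw [Finset.mem_range] at hi
        have hc : Nat.choose (t + i - 1) (t - 1) = Nat.choose (t + i - 1) i := by
          rw [show t - 1 = (t + i - 1) - i by omega]
          exact Nat.choose_symm (by omega)
        have hc2 : (Nat.choose (t + i - 1) (t - 1) : ℝ) ≤ (2 : ℝ) ^ s * (t : ℝ) ^ s := by
          rw [hc]
          calc (Nat.choose (t + i - 1) i : ℝ) ≤ ((t + i - 1 : ℕ) : ℝ) ^ i := by
                exact_mod_cast Nat.choose_le_pow _ _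
            _ ≤ ((2 * t : ℕ) : ℝ) ^ i := by
                apply pow_le_pow_left₀ (by positivity)
                exact_mod_cast (by omega : t + i - 1 ≤ 2 * t)
            _ ≤ ((2 * t : ℕ) : ℝ) ^ s := by
                apply pow_le_pow_right₀ (by exact_mod_cast (by omega : 1 ≤ 2 * t))
                omega
            _ = (2 : ℝ) ^ s * (t : ℝ) ^ s := by push_cast; rw [mul_pow]
        have hrest : p ^ (t + i - t) * q ^ t * Real.exp ((t + i : ℕ) * x) ≤ r ^ t := by
          rw [show t + i - t = i by omega]
          push_cast
          rw [add_mul, Real.exp_add, Real.exp_nat_mul, Real.exp_nat_mul]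
          have : p ^ i * q ^ t * ((Real.exp x) ^ t * (Real.exp x) ^ i)
              = P ^ i * r ^ t := by rw [hP_def, hr_def, mul_pow, mul_pow]; ring
          rw [this]
          calc P ^ i * r ^ t ≤ 1 * r ^ t := by
                apply mul_le_mul_of_nonneg_right _ (by positivity)
                exact pow_le_one₀ (le_of_lt hP0) (le_of_lt hP1)
            _ = r ^ t := one_mul _
        calc (Nat.choose (t + i - 1) (t - 1) : ℝ) * p ^ (t + i - t) * q ^ t *
              Real.exp ((t + i : ℕ) * x)
            = (Nat.choose (t + i - 1) (t - 1) : ℝ) *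
              (p ^ (t + i - t) * q ^ t * Real.exp ((t + i : ℕ) * x)) := by ring
          _ ≤ (2 ^ s * (t : ℝ) ^ s) * r ^ t := by
              apply mul_le_mul hc2 hrest (by positivity)
              positivity
          _ = 2 ^ s * (t : ℝ) ^ s * r ^ t := rfl
      calc (∑ i ∈ Finset.range s, (Nat.choose (t + i - 1) (t - 1) : ℝ) *
              p ^ (t + i - t) * q ^ t * Real.exp ((t + i : ℕ) * x))
          ≤ ∑ _i ∈ Finset.range s, 2 ^ s * (t : ℝ) ^ s * r ^ t :=
            Finset.sum_le_sum hbound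
        _ = (s * 2 ^ s : ℝ) * ((t : ℝ) ^ s * r ^ t) := by
            rw [Finset.sum_const, Finset.card_range]; push_cast; ring
  have := hA.add hB
  rw [add_zero] at this
  convert this using 2
  rw [div_pow, div_eq_mul_one_div]
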